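/- For every n ≥ 2, the evaluation of Q_n at 0 equals the Lucas number L_n, and the evaluation of Q_n at 1 equals the Jacobsthal–Lucas number J_n. -/
import Mathlib


open Polynomial

/-- The cube polynomials `Q n` of the matchable Lucas cubes. -/
noncomputable def Q : ℕ → Polynomial ℤ
  | 0 => 1
  | 1 => 2 + X
  | 2 => 3 + 2 * X
  | 3 => 4 + 3 * X
  | (n + 4) => Q (n + 3) + (1 + X) * Q (n + 2)

/-- `q n k` : the number of `k`-dimensional induced hypercubes of `Ω_n`,
i.e. the coefficient of `x^k` in `Q n`. -/
noncomputable def q (n k : ℕ) : ℤ := (Q n).coeff k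

/-- The Lucas numbers. -/
def L : ℕ → ℤ
  | 0 => 2
  | 1 => 1
  | (n + 2) => L (n + 1) + L n

/-- The Jacobsthal–Lucas numbers. -/
def J : ℕ → ℤ
  | 0 => 2
  | 1 => 1
  | (n + 2) => J (n + 1) + 2 * J n

theorem eval_Q_zero_one (n : ℕ) (hn : 2 ≤ n) :
    (Q n).eval 0 = L n ∧ (Q n).eval 1 = J n := by
  induction n using Nat.strong_induction_on with
  | _ n ih =>
    match n, hn with
    | 2, _ => simp [Q, L, J]
    | 3, _ => simp [Q, L, J]
    | (m + 4), _ =>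
      have h2 := ih (m + 2) (by omega) (by omega)
      have h3 := ih (m + 3) (by omega) (by omega)
      constructor
      · show (Q (m + 3) + (1 + X) * Q (m + 2)).eval 0 = L (m + 3) + L (m + 2)
        simp [h2.1, h3.1]
      · show (Q (m + 3) + (1 + X) * Q (m + 2)).eval 1 = J (m + 3) + 2 * J (m + 2)
        simp [h2.2, h3.2]
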